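/- Let K be a field of characteristic zero and n ≥ 1, d ≥ 0. The rows of the multiplicity matrix M(Δ_{n,d}, Δ_{n,d−1}) — i.e., the linear functionals on the space of weightings of the complete d-complex Δ_{n,d} given by w ↦ ∑_{σ∈Δ_{n,d}} w(σ)·m(τ⊆σ) for each (d−1)-simplex τ — are linearly independent. Consequently, the K-vector space of balancings of the complete d-complex Δ_{n,d} on n vertices has dimension C(n+d−1, d+1). -/

import Mathlib

open scoped BigOperators

/-- The multiplicity `m(T ⊆ σ) = ∏ i, C(σ i, T i)` of a multiset `T` in a multiset `σ`
on `{1, …, n}` (multisets encoded as functions `Fin n → ℕ`). -/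
def mult {n : ℕ} (T σ : Fin n → ℕ) : ℕ := ∏ i, (σ i).choose (T i)

/-- The complete `d`-complex `Δ_{n,d}` on `n` vertices: all multisets of cardinality
`d + 1` on `{1,…,n}` (their multiplicities are automatically `< d + 2`). -/
def completeComplex (n d : ℕ) : Finset (Fin n → ℕ) :=
  (Fintype.piFinset fun _ : Fin n => Finset.range (d + 2)).filter
    (fun σ => ∑ i, σ i = d + 1)

/-- The `K`-vector space of balancings of the complete `d`-complex `Δ_{n,d}`:
weightings supported on `Δ_{n,d}` satisfying the balancing condition for every
multiset `T` of cardinality `≤ d`. -/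
noncomputable def balancingSpace (K : Type*) [Field K] (n d : ℕ) :
    Submodule K ((Fin n → ℕ) → K) :=
  (⨅ σ : {σ : Fin n → ℕ // σ ∉ completeComplex n d},
      LinearMap.ker (LinearMap.proj σ.1 : ((Fin n → ℕ) → K) →ₗ[K] K)) ⊓
  (⨅ T : {T : Fin n → ℕ // ∑ i, T i ≤ d},
      LinearMap.ker (∑ σ ∈ completeComplex n d, (mult T.1 σ : K) •
        (LinearMap.proj σ : ((Fin n → ℕ) → K) →ₗ[K] K)))

namespace CCB

/-! ### The finset of compositions -/

def comp (n k : ℕ) : Finset (Fin n → ℕ) :=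
  (Fintype.piFinset fun _ : Fin n => Finset.range (k + 1)).filter
    (fun f => ∑ i, f i = k)

lemma mem_comp {n k : ℕ} {f : Fin n → ℕ} : f ∈ comp n k ↔ ∑ i, f i = k := by
  simp only [comp, Finset.mem_filter, Fintype.mem_piFinset, Finset.mem_range]
  refine ⟨fun h => h.2, fun h => ⟨fun i => ?_, h⟩⟩
  have : f i ≤ ∑ j, f j := Finset.single_le_sum (fun j _ => Nat.zero_le _) (Finset.mem_univ i)
  omega

lemma completeComplex_eq (n d : ℕ) : completeComplex n d = comp n (d + 1) := rfl

lemma mult_ne_zero_iff {n : ℕ} {T σ : Fin n → ℕ} : mult T σ ≠ 0 ↔ ∀ i, T i ≤ σ i := by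
  simp [mult, Finset.prod_ne_zero_iff, Nat.choose_eq_zero_iff, not_lt]

lemma sum_comp_succ {M : Type*} [AddCommMonoid M] (n k : ℕ) (g : (Fin (n+1) → ℕ) → M) :
    ∑ f ∈ comp (n+1) k, g f
      = ∑ j ∈ Finset.range (k+1), ∑ t ∈ comp n (k - j), g (Fin.cons j t) := by
  rw [Finset.sum_sigma']
  refine (Finset.sum_bij' (fun (x : Σ _j : ℕ, Fin n → ℕ) _ => Fin.cons x.1 x.2)
    (fun f _ => ⟨f 0, Fin.tail f⟩) ?_ ?_ ?_ ?_ ?_).symm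
  · rintro ⟨j, t⟩ hx
    simp only [Finset.mem_sigma, Finset.mem_range, mem_comp] at hx
    rw [mem_comp, Fin.sum_univ_succ]
    simp only [Fin.cons_zero, Fin.cons_succ]
    omega
  · intro f hf
    rw [mem_comp] at hf
    simp only [Finset.mem_sigma, Finset.mem_range, mem_comp]
    rw [Fin.sum_univ_succ] at hf
    constructor
    · omega
    · simp only [Fin.tail]
      omega
  · rintro ⟨j, t⟩ hx
    simp [Fin.tail_cons]
  · intro f hf
    simp only
    exact Fin.cons_self_tail f
  · rintro ⟨j, t⟩ hx
    rfl

lemma vandermonde (n k : ℕ) (m : Fin n → ℕ) :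
    ∑ U ∈ comp n k, ∏ i, (m i).choose (U i) = (∑ i, m i).choose k := by
  induction n generalizing k with
  | zero =>
    cases k with
    | zero => simp [comp]
    | succ k =>
      have : comp 0 (k+1) = ∅ := by
        ext f
        simp [mem_comp]
      simp [this]
  | succ n ih =>
    rw [sum_comp_succ, Fin.sum_univ_succ, Nat.add_choose_eq,
      Finset.Nat.sum_antidiagonal_eq_sum_range_succ_mk]
    refine Finset.sum_congr rfl fun j hj => ?_
    rw [Finset.mem_range] at hj
    simp only
    rw [← ih (k - j) (fun i => m i.succ), Finset.mul_sum]
    refine Finset.sum_congr rfl fun t ht => ?_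
    rw [Fin.prod_univ_succ]
    simp [Fin.cons_succ]

lemma aux_hockey (n k : ℕ) :
    ∑ j ∈ Finset.range (k+1), (n + j - 1).choose j = (n + k).choose k := by
  induction k with
  | zero => simp
  | succ k ih =>
    rw [Finset.sum_range_succ, ih]
    have h1 : n + (k+1) - 1 = n + k := by omega
    rw [h1, show n + (k+1) = (n+k)+1 from rfl, Nat.choose_succ_succ']

lemma choose_helper (a b c : ℕ) :
    a.choose (b + c) * (b + c).choose b = a.choose b * (a - b).choose c := by
  rcases le_or_gt (b + c) a with h | h
  · have := Nat.choose_mul (n := a) (k := b + c) (s := b) (Nat.le_add_right b c)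
    simpa using this
  · rw [Nat.choose_eq_zero_of_lt h, Nat.zero_mul]
    rcases le_or_gt b a with hb | hb
    · rw [Nat.choose_eq_zero_of_lt (by omega : a - b < c), Nat.mul_zero]
    · rw [Nat.choose_eq_zero_of_lt hb, Nat.zero_mul]

lemma comp_zero_succ (k : ℕ) : comp 0 (k+1) = ∅ := by
  ext f; simp [mem_comp]

lemma card_comp (n k : ℕ) : (comp n k).card = (n + k - 1).choose k := by
  induction n generalizing k with
  | zero =>
    cases k with
    | zero =>
      have h1 : comp 0 0 = {(fun _ => 0 : Fin 0 → ℕ)} := by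
        ext f
        simp [mem_comp, eq_iff_true_of_subsingleton]
      simp [h1]
    | succ k =>
      rw [comp_zero_succ]
      simp [Nat.choose_eq_zero_of_lt (by omega : 0 + (k+1) - 1 < k + 1)]
  | succ n ih =>
    rw [Finset.card_eq_sum_ones, sum_comp_succ]
    have h1 : ∀ j ∈ Finset.range (k+1),
        (∑ _t ∈ comp n (k - j), 1) = (n + (k - j) - 1).choose (k - j) := by
      intro j hj
      rw [← Finset.card_eq_sum_ones, ih]
    rw [Finset.sum_congr rfl h1, ← Finset.sum_range_reflect]
    have h2 : ∀ j ∈ Finset.range (k+1),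
        (n + (k - (k + 1 - 1 - j)) - 1).choose (k - (k + 1 - 1 - j)) = (n + j - 1).choose j := by
      intro j hj
      rw [Finset.mem_range] at hj
      have : k - (k + 1 - 1 - j) = j := by omega
      rw [this]
    rw [Finset.sum_congr rfl h2, aux_hockey]
    congr 1
    omega

/-- The key identity. -/
lemma key (n d : ℕ) (T σ : Fin n → ℕ) (hT : ∑ i, T i ≤ d) :
    ∑ T' ∈ comp n d, mult T T' * mult T' σ
      = (∑ i, σ i - ∑ i, T i).choose (d - ∑ i, T i) * mult T σ := by
  classical
  by_cases hle : ∀ i, T i ≤ σ i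
  case neg =>
    have hms : mult T σ = 0 := by
      by_contra h; exact hle (mult_ne_zero_iff.mp h)
    rw [hms, Nat.mul_zero]
    refine Finset.sum_eq_zero fun T' _ => ?_
    by_cases h1 : mult T T' = 0
    · rw [h1, Nat.zero_mul]
    · have h2 : mult T' σ = 0 := by
        by_contra h2
        exact hle fun i => le_trans (mult_ne_zero_iff.mp h1 i) (mult_ne_zero_iff.mp h2 i)
      rw [h2, Nat.mul_zero]
  case pos =>
    have step1 : ∑ T' ∈ comp n d, mult T T' * mult T' σ
        = ∑ T' ∈ (comp n d).filter (fun T' => ∀ i, T i ≤ T' i), mult T T' * mult T' σ :=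
      (Finset.sum_filter_of_ne fun T' _ hne => mult_ne_zero_iff.mp (left_ne_zero_of_mul hne)).symm
    have step2 : ∑ T' ∈ (comp n d).filter (fun T' => ∀ i, T i ≤ T' i), mult T T' * mult T' σ
        = ∑ U ∈ comp n (d - ∑ i, T i), mult T σ * ∏ i, (σ i - T i).choose (U i) := by
      refine Finset.sum_bij' (fun T' _ => fun i => T' i - T i) (fun U _ => fun i => T i + U i)
        ?_ ?_ ?_ ?_ ?_
      · intro T' hT'
        rw [Finset.mem_filter, mem_comp] at hT'
        simp only [mem_comp]
        rw [Finset.sum_tsub_distrib _ (fun i _ => hT'.2 i), hT'.1]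
      · intro U hU
        rw [mem_comp] at hU
        simp only [Finset.mem_filter, mem_comp, Finset.sum_add_distrib, hU]
        exact ⟨Nat.add_sub_cancel' hT, fun i => Nat.le_add_right _ _⟩
      · intro T' hT'
        rw [Finset.mem_filter] at hT'
        funext i
        exact Nat.add_sub_cancel' (hT'.2 i)
      · intro U _
        funext i
        show T i + U i - T i = U i
        exact Nat.add_sub_cancel_left (n := T i) (m := U i)
      · intro T' hT'
        rw [Finset.mem_filter] at hT'
        simp only [mult, ← Finset.prod_mul_distrib]
        refine Finset.prod_congr rfl fun i _ => ?_
        have hb : T i ≤ T' i := hT'.2 i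
        have h3 := choose_helper (σ i) (T i) (T' i - T i)
        rw [Nat.add_sub_cancel' hb] at h3
        rw [Nat.mul_comm, h3]
    rw [step1, step2, ← Finset.mul_sum, vandermonde,
      Finset.sum_tsub_distrib _ (fun i _ => hle i), Nat.mul_comm]

/-! ### Linear independence of the rows -/

lemma rows_indep (K : Type*) [Field K] [CharZero K] (n d : ℕ) (hn : 1 ≤ n) :
    LinearIndependent K
      (fun T : {T : Fin n → ℕ // ∑ i, T i = d} =>
        (fun σ : {σ : Fin n → ℕ // ∑ i, σ i = d + 1} => (mult T.1 σ.1 : K))) := by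
  classical
  rw [linearIndependent_iff]
  intro l hl
  by_contra hne
  have hsupp : l.support.Nonempty := Finsupp.support_nonempty_iff.2 hne
  set i0 : Fin n := ⟨0, hn⟩ with hi0
  obtain ⟨T₀, hT₀mem, hmax⟩ := Finset.exists_max_image l.support (fun T => T.1 i0) hsupp
  set σf : Fin n → ℕ := Function.update T₀.1 i0 (T₀.1 i0 + 1) with hσf
  have hσ₀sum : ∑ i, σf i = d + 1 := by
    rw [hσf, Finset.sum_update_of_mem (Finset.mem_univ i0)]
    have h5 : ∑ i, T₀.1 i = (∑ i ∈ Finset.univ \ {i0}, T₀.1 i) + T₀.1 i0 :=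
      Finset.sum_eq_sum_sdiff_singleton_add (Finset.mem_univ i0) _
    have h6 := T₀.2
    omega
  set σ₀ : {σ : Fin n → ℕ // ∑ i, σ i = d + 1} := ⟨σf, hσ₀sum⟩ with hσ₀
  rw [Finsupp.linearCombination_apply, Finsupp.sum] at hl
  have h0 := congrFun hl σ₀
  simp only [Finset.sum_apply, Pi.smul_apply, smul_eq_mul, Pi.zero_apply] at h0
  rw [Finset.sum_eq_single T₀ (fun T hT hTne => ?_) (fun h => absurd hT₀mem h)] at h0
  · have hm0 : mult T₀.1 σ₀.1 ≠ 0 := by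
      refine mult_ne_zero_iff.2 fun i => ?_
      show T₀.1 i ≤ Function.update T₀.1 i0 (T₀.1 i0 + 1) i
      by_cases hi : i = i0
      · subst hi; simp
      · rw [Function.update_of_ne hi]
    have : l T₀ = 0 := by
      rcases mul_eq_zero.mp h0 with h | h
      · exact h
      · exact absurd (Nat.cast_eq_zero.mp h) hm0
    exact (Finsupp.mem_support_iff.mp hT₀mem) this
  · -- off-diagonal terms vanish
    have hm : (mult T.1 σ₀.1 : K) = 0 := by
      by_contra hm
      have hle : ∀ i, T.1 i ≤ σ₀.1 i :=
        mult_ne_zero_iff.mp fun h => hm (by rw [h, Nat.cast_zero])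
      have hle' : ∀ i, T.1 i ≤ T₀.1 i := by
        intro i
        by_cases hi : i = i0
        · subst hi; exact hmax T hT
        · have h7 := hle i
          have : σ₀.1 i = T₀.1 i := by
            show σf i = _
            rw [hσf, Function.update_of_ne hi]
          omega
      have hsum : ∑ i, T.1 i = ∑ i, T₀.1 i := by rw [T.2, T₀.2]
      have heq : ∀ i ∈ Finset.univ, T.1 i = T₀.1 i :=
        (Finset.sum_eq_sum_iff_of_le (fun i _ => hle' i)).mp hsum
      exact hTne (Subtype.ext (funext fun i => heq i (Finset.mem_univ i)))
    rw [hm, mul_zero]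

end CCB

namespace CCB

variable (K : Type*) [Field K]

/-- Extension by zero from functions on `Δ` to functions on all multisets. -/
noncomputable def extZero (n d : ℕ) :
    ({x // x ∈ comp n (d+1)} → K) →ₗ[K] ((Fin n → ℕ) → K) where
  toFun w := fun σ => if h : σ ∈ comp n (d+1) then w ⟨σ, h⟩ else 0
  map_add' w₁ w₂ := by
    funext σ
    by_cases h : σ ∈ comp n (d+1) <;> simp [h]
  map_smul' c w := by
    funext σ
    by_cases h : σ ∈ comp n (d+1) <;> simp [h]

lemma extZero_injective (n d : ℕ) : Function.Injective (extZero K n d) := by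
  intro w₁ w₂ h
  funext σ
  have := congrFun h σ.1
  simpa [extZero, dif_pos σ.2] using this

lemma mem_balancing (n d : ℕ) (u : (Fin n → ℕ) → K) :
    u ∈ balancingSpace K n d ↔
      (∀ σ, σ ∉ completeComplex n d → u σ = 0) ∧
      (∀ T : Fin n → ℕ, ∑ i, T i ≤ d →
        ∑ σ ∈ completeComplex n d, (mult T σ : K) * u σ = 0) := by
  simp only [balancingSpace, Submodule.mem_inf, Submodule.mem_iInf, LinearMap.mem_ker,
    LinearMap.proj_apply, Subtype.forall, LinearMap.coe_sum, Finset.sum_apply,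
    LinearMap.smul_apply, smul_eq_mul]

end CCB

theorem complete_complex_balancings (K : Type*) [Field K] [CharZero K]
    (n d : ℕ) (hn : 1 ≤ n) :
    LinearIndependent K
      (fun T : {T : Fin n → ℕ // ∑ i, T i = d} =>
        (fun σ : {σ : Fin n → ℕ // ∑ i, σ i = d + 1} => (mult T.1 σ.1 : K)))
    ∧ Module.finrank K (balancingSpace K n d) = (n + d - 1).choose (d + 1) := by
  classical
  open CCB in
  refine ⟨rows_indep K n d hn, ?_⟩
  set ι := {x // x ∈ CCB.comp n d}
  set κ := {x // x ∈ CCB.comp n (d+1)}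
  set A : Matrix ι κ K := Matrix.of (fun T σ => (mult T.1 σ.1 : K)) with hA
  -- transfer the independence to the rows of `A`
  have hAindep : LinearIndependent K (fun T : ι => A T) := by
    have h1 := (CCB.rows_indep K n d hn).comp
      (fun T : ι => (⟨T.1, CCB.mem_comp.mp T.2⟩ : {T : Fin n → ℕ // ∑ i, T i = d}))
      (fun T₁ T₂ h => Subtype.ext (congrArg (Subtype.val : {T : Fin n → ℕ // ∑ i, T i = d} → (Fin n → ℕ)) h))
    have h2 := h1.map' (LinearEquiv.funCongrLeft K K
      ((Equiv.subtypeEquivRight (fun σ => CCB.mem_comp)) :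
        κ ≃ {σ : Fin n → ℕ // ∑ i, σ i = d + 1})).toLinearMap
      (LinearEquiv.ker _)
    exact h2
  have hrank : A.rank = Fintype.card ι := hAindep.rank_matrix
  have hdim : Module.finrank K (LinearMap.range A.mulVecLin)
      + Module.finrank K (LinearMap.ker A.mulVecLin) = Module.finrank K (κ → K) :=
    LinearMap.finrank_range_add_finrank_ker _
  have hκcard : Fintype.card κ = (n + d).choose (d + 1) := by
    rw [Fintype.card_coe, CCB.card_comp, show n + (d + 1) - 1 = n + d by omega]
  have hιcard : Fintype.card ι = (n + d - 1).choose d := by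
    rw [Fintype.card_coe, CCB.card_comp]
  have hker : Module.finrank K (LinearMap.ker A.mulVecLin) = (n + d - 1).choose (d + 1) := by
    rw [Module.finrank_fintype_fun_eq_card, hκcard] at hdim
    have : Module.finrank K (LinearMap.range A.mulVecLin) = (n + d - 1).choose d := by
      rw [← hιcard, ← hrank]; rfl
    rw [this] at hdim
    obtain ⟨m, rfl⟩ : ∃ m, n = m + 1 := ⟨n - 1, by omega⟩
    have hp : (m + 1 + d).choose (d + 1) = (m + d).choose d + (m + d).choose (d + 1) := by
      rw [show m + 1 + d = (m + d) + 1 by ring, Nat.choose_succ_succ']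
    have h9 : m + 1 + d - 1 = m + d := by omega
    rw [h9] at hdim ⊢
    omega
  -- identify the balancing space with the kernel
  have hbal : balancingSpace K n d = Submodule.map (CCB.extZero K n d)
      (LinearMap.ker A.mulVecLin) := by
    ext u
    rw [Submodule.mem_map, CCB.mem_balancing]
    constructor
    · rintro ⟨h1, h2⟩
      refine ⟨fun σ => u σ.1, ?_, ?_⟩
      · rw [LinearMap.mem_ker]
        funext T
        have h3 := h2 T.1 (le_of_eq (CCB.mem_comp.mp T.2))
        rw [CCB.completeComplex_eq] at h3
        rw [← Finset.sum_attach (CCB.comp n (d+1))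
          (fun σ => (mult T.1 σ : K) * u σ)] at h3
        simp [Matrix.mulVecLin_apply, Matrix.mulVec, dotProduct, hA]
        rw [← h3]
        exact Finset.sum_congr (Finset.eq_univ_of_forall fun x => Finset.mem_attach _ x).symm
          fun _ _ => rfl
      · funext σ
        by_cases h : σ ∈ CCB.comp n (d+1)
        · exact dif_pos h
        · rw [show (CCB.extZero K n d (fun σ : κ => u σ.1)) σ = 0 from dif_neg h]
          exact (h1 σ (by rwa [CCB.completeComplex_eq])).symm
    · rintro ⟨w, hw, rfl⟩
      rw [LinearMap.mem_ker] at hw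
      have hS : ∀ T' ∈ CCB.comp n d, ∑ σ : κ, (mult T' σ.1 : K) * w σ = 0 := by
        intro T' hT'
        have h4 := congrFun hw ⟨T', hT'⟩
        simpa [Matrix.mulVecLin_apply, Matrix.mulVec, dotProduct, hA] using h4
      constructor
      · intro σ hσ
        exact dif_neg (by rwa [CCB.completeComplex_eq] at hσ)
      · intro T hT
        set e := ∑ i, T i with he
        have hkey : ∀ σ : κ, ((d - e + 1) * mult T σ.1 : ℕ)
            = ∑ T' ∈ CCB.comp n d, mult T T' * mult T' σ.1 := by
          intro σ
          have h5 := CCB.key n d T σ.1 hT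
          rw [CCB.mem_comp.mp σ.2] at h5
          rw [h5, show d + 1 - e = (d - e) + 1 by omega, Nat.choose_succ_self_right]
        have hEw : ∀ σ : κ, (CCB.extZero K n d w) σ.1 = w σ := fun σ => dif_pos σ.2
        have hsum0 : ∑ σ ∈ completeComplex n d, (mult T σ : K) * (CCB.extZero K n d w) σ
            = ∑ σ : κ, (mult T σ.1 : K) * w σ := by
          rw [CCB.completeComplex_eq, ← Finset.sum_attach (CCB.comp n (d+1))
            (fun σ => (mult T σ : K) * (CCB.extZero K n d w) σ), Finset.univ_eq_attach]
          exact Finset.sum_congr rfl fun σ _ => by rw [hEw σ]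
        rw [hsum0]
        have hc : ((d - e + 1 : ℕ) : K) ≠ 0 := Nat.cast_ne_zero.2 (Nat.succ_ne_zero _)
        have main : ((d - e + 1 : ℕ) : K) * (∑ σ : κ, (mult T σ.1 : K) * w σ) = 0 := by
          rw [Finset.mul_sum]
          calc ∑ σ : κ, ((d - e + 1 : ℕ) : K) * ((mult T σ.1 : K) * w σ)
              = ∑ σ : κ, (((d - e + 1) * mult T σ.1 : ℕ) : K) * w σ := by
                refine Finset.sum_congr rfl fun σ _ => ?_
                push_cast
                ring
            _ = ∑ σ : κ, ∑ T' ∈ CCB.comp n d, (mult T T' : K) * ((mult T' σ.1 : K) * w σ) := by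
                refine Finset.sum_congr rfl fun σ _ => ?_
                rw [hkey σ]
                push_cast
                rw [Finset.sum_mul]
                exact Finset.sum_congr rfl fun T' _ => by ring
            _ = ∑ T' ∈ CCB.comp n d, ∑ σ : κ, (mult T T' : K) * ((mult T' σ.1 : K) * w σ) :=
                Finset.sum_comm
            _ = ∑ T' ∈ CCB.comp n d, (mult T T' : K) * ∑ σ : κ, (mult T' σ.1 : K) * w σ :=
                Finset.sum_congr rfl fun T' _ => (Finset.mul_sum _ _ _).symm
            _ = 0 := Finset.sum_eq_zero fun T' hT' => by rw [hS T' hT', mul_zero]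
        exact (mul_eq_zero.mp main).resolve_left hc
  rw [hbal, ← LinearEquiv.finrank_eq
    (Submodule.equivMapOfInjective _ (CCB.extZero_injective K n d) (LinearMap.ker A.mulVecLin)),
    hker]
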